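/- Let G be the graph whose vertices are V = {x ∈ {−1,1}^{2n} : Σᵢ xᵢ = 0}, with x ~ y iff x and y differ exactly in two consecutive coordinates i, i+1 (with xᵢ ≠ x_{i+1}). Then Ric(G) ≥ −1: for every f:V→ℝ and every vertex x, Γ₂(f)(x) ≥ −Γ(f)(x). -/

import Mathlib

noncomputable section
open Matrix

/-- The graph Laplacian: `Δ f (x) = Σ_{y ~ x} (f y - f x)`. -/
def lap {V : Type*} (G : SimpleGraph V) (f : V → ℝ) (x : V) : ℝ :=
  ∑ᶠ y ∈ {y | G.Adj x y}, (f y - f x)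

/-- The carré du champ `Γ(f,g)(x) = (1/2) Σ_{y ~ x} (f x - f y)(g x - g y)`. -/
def gam {V : Type*} (G : SimpleGraph V) (f g : V → ℝ) (x : V) : ℝ :=
  (1/2) * ∑ᶠ y ∈ {y | G.Adj x y}, (f x - f y) * (g x - g y)

/-- The iterated carré du champ `Γ₂(f) = (1/2) Δ Γ(f) - Γ(f, Δ f)`. -/
def gam2 {V : Type*} (G : SimpleGraph V) (f : V → ℝ) (x : V) : ℝ :=
  (1/2) * lap G (gam G f f) x - gam G f (lap G f) x

/-- `Ric(G) ≥ K` : the Bochner inequality `Γ₂(f)(x) ≥ K Γ(f)(x)` holds for all `f, x`. -/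
def RicGE {V : Type*} (G : SimpleGraph V) (K : ℝ) : Prop :=
  ∀ (f : V → ℝ) (x : V), K * gam G f f x ≤ gam2 G f x

/-- Adjacency by an adjacent transposition: `y` is obtained from `x` by exchanging the
(distinct) values in two consecutive coordinates `i, i+1`. -/
def adjTransp (N : ℕ) (x y : Fin N → ℤ) : Prop :=
  ∃ (i : ℕ) (h : i + 1 < N),
    x ⟨i, by omega⟩ ≠ x ⟨i + 1, h⟩ ∧
    y = x ∘ (Equiv.swap ⟨i, by omega⟩ ⟨i + 1, h⟩)

/-- Vertices of the middle slice: `±1`-sequences of length `2n` summing to `0`. -/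
def MidSlice (n : ℕ) : Type :=
  {x : Fin (2 * n) → ℤ // (∀ i, x i = 1 ∨ x i = -1) ∧ ∑ i, x i = 0}

/-- The middle slice with adjacent transpositions. -/
def midSliceGraph (n : ℕ) : SimpleGraph (MidSlice n) where
  Adj x y := adjTransp (2 * n) x.1 y.1
  symm := by
    constructor
    rintro x y ⟨i, h, hne, heq⟩
    refine ⟨i, h, ?_, ?_⟩
    · rw [heq]
      simpa [Function.comp, Equiv.swap_apply_left, Equiv.swap_apply_right] using hne.symm
    · rw [heq]
      funext j
      simp [Function.comp, Equiv.swap_apply_self]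
  loopless := by
    constructor
    rintro x ⟨i, h, hne, heq⟩
    apply hne
    conv_lhs => rw [heq]
    simp [Function.comp, Equiv.swap_apply_left]

namespace MSAux

instance {n : ℕ} : DecidableEq (MidSlice n) := Classical.decEq _

variable {n : ℕ}

def xe (x : MidSlice n) (i : ℕ) : ℤ := if h : i < 2*n then x.1 ⟨i, h⟩ else 0

lemma xe_pm (x : MidSlice n) {i : ℕ} (h : i < 2*n) : xe x i = 1 ∨ xe x i = -1 := by
  unfold xe; rw [dif_pos h]; exact x.2.1 _

def Dx (x : MidSlice n) : Finset ℕ :=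
  (Finset.range (2*n-1)).filter (fun i => xe x i ≠ xe x (i+1))

lemma mem_Dx {x : MidSlice n} {i : ℕ} :
    i ∈ Dx x ↔ (i+1 < 2*n ∧ xe x i ≠ xe x (i+1)) := by
  unfold Dx
  simp only [Finset.mem_filter, Finset.mem_range]
  constructor
  · rintro ⟨h1, h2⟩; exact ⟨by omega, h2⟩
  · rintro ⟨h1, h2⟩; exact ⟨by omega, h2⟩

def swv (x : MidSlice n) (i : ℕ) : MidSlice n :=
  if h : i + 1 < 2*n then
    ⟨x.1 ∘ Equiv.swap ⟨i, Nat.lt_of_succ_lt h⟩ ⟨i+1, h⟩,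
      ⟨fun j => x.2.1 _, by exact (Equiv.sum_comp _ x.1).trans x.2.2⟩⟩
  else x

lemma swv_val {x : MidSlice n} {i : ℕ} (h : i + 1 < 2*n) :
    (swv x i).1 = x.1 ∘ Equiv.swap ⟨i, by omega⟩ ⟨i+1, h⟩ := by
  unfold swv; exact congrArg Subtype.val (dif_pos h)

lemma xe_swv {x : MidSlice n} {i : ℕ} (h : i+1 < 2*n) (j : ℕ) :
    xe (swv x i) j = if j = i then xe x (i+1) else if j = i+1 then xe x i else xe x j := by
  have hv := swv_val (x := x) h
  unfold xe
  by_cases hj : j < 2*n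
  · rw [dif_pos hj, hv]
    simp only [Function.comp_apply, Equiv.swap_apply_def, Fin.mk.injEq]
    split_ifs <;> first | rfl | omega
  · rw [dif_neg hj, if_neg (by omega), if_neg (by omega), dif_neg hj]

lemma adj_iff {x y : MidSlice n} :
    (midSliceGraph n).Adj x y ↔ ∃ i ∈ Dx x, y = swv x i := by
  constructor
  · rintro ⟨i, h, hne, heq⟩
    refine ⟨i, mem_Dx.2 ⟨h, ?_⟩, ?_⟩
    · unfold xe
      rw [dif_pos (by omega : i < 2*n), dif_pos h]
      exact hne
    · apply Subtype.ext; rw [swv_val h]; exact heq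
  · rintro ⟨i, hi, rfl⟩
    obtain ⟨h, hne⟩ := mem_Dx.1 hi
    refine ⟨i, h, ?_, ?_⟩
    · unfold xe at hne
      rw [dif_pos (by omega : i < 2*n), dif_pos h] at hne
      exact hne
    · rw [swv_val h]

lemma swv_swv {x : MidSlice n} {i : ℕ} (h : i+1 < 2*n) : swv (swv x i) i = x := by
  apply Subtype.ext
  rw [swv_val h, swv_val h]
  funext k
  simp [Function.comp, Equiv.swap_apply_self]

lemma mem_Dx_swv {x : MidSlice n} {i : ℕ} (hi : i ∈ Dx x) : i ∈ Dx (swv x i) := by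
  obtain ⟨h, hne⟩ := mem_Dx.1 hi
  refine mem_Dx.2 ⟨h, ?_⟩
  rw [xe_swv h i, xe_swv h (i+1), if_pos rfl, if_neg (by omega), if_pos rfl]
  exact hne.symm

lemma swv_inj {x : MidSlice n} {i j : ℕ} (hi : i ∈ Dx x) (hj : j ∈ Dx x)
    (h : swv x i = swv x j) : i = j := by
  by_contra hcne
  obtain ⟨h1, hne1⟩ := mem_Dx.1 hi
  obtain ⟨h2, hne2⟩ := mem_Dx.1 hj
  by_cases hc : i = j + 1
  · have hx := congrArg (fun v => xe v j) h
    rw [xe_swv h1 j, xe_swv h2 j, if_neg (by omega), if_neg (by omega), if_pos rfl] at hx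
    exact hne2 hx
  · have hx := congrArg (fun v => xe v i) h
    rw [xe_swv h1 i, xe_swv h2 i, if_pos rfl, if_neg hcne, if_neg hc] at hx
    exact hne1 hx.symm

lemma nb_eq (x : MidSlice n) :
    {y | (midSliceGraph n).Adj x y} = ↑((Dx x).image (swv x)) := by
  ext y
  simp only [Set.mem_setOf_eq, Finset.coe_image, Set.mem_image, Finset.mem_coe]
  rw [adj_iff]
  constructor
  · rintro ⟨i, hi, rfl⟩; exact ⟨i, hi, rfl⟩
  · rintro ⟨i, hi, rfl⟩; exact ⟨i, hi, rfl⟩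

lemma finsum_nb (x : MidSlice n) (g : MidSlice n → ℝ) :
    ∑ᶠ y ∈ {y | (midSliceGraph n).Adj x y}, g y = ∑ i ∈ Dx x, g (swv x i) := by
  rw [nb_eq, finsum_mem_coe_finset, Finset.sum_image (fun i hi j hj => swv_inj hi hj)]

lemma lap_eq (f : MidSlice n → ℝ) (x : MidSlice n) :
    lap (midSliceGraph n) f x = ∑ i ∈ Dx x, (f (swv x i) - f x) := finsum_nb x _

lemma gam_eq (f g : MidSlice n → ℝ) (x : MidSlice n) :
    gam (midSliceGraph n) f g x
      = (1/2) * ∑ i ∈ Dx x, (f x - f (swv x i)) * (g x - g (swv x i)) := by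
  unfold gam; rw [finsum_nb]


lemma far_mem {x : MidSlice n} {i j : ℕ} (hi : i ∈ Dx x) (hj : j ∈ Dx x)
    (hf : ¬(j = i ∨ j = i+1 ∨ i = j+1)) : j ∈ Dx (swv x i) := by
  obtain ⟨h1, _⟩ := mem_Dx.1 hi
  obtain ⟨h2, hne⟩ := mem_Dx.1 hj
  refine mem_Dx.2 ⟨h2, ?_⟩
  rw [xe_swv h1 j, if_neg (by omega), if_neg (by omega),
      xe_swv h1 (j+1), if_neg (by omega), if_neg (by omega)]
  exact hne

lemma ms_ext {x y : MidSlice n} (h : ∀ j, xe x j = xe y j) : x = y := by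
  apply Subtype.ext
  funext k
  have hk := h k.val
  unfold xe at hk
  rw [dif_pos k.2, dif_pos k.2] at hk
  simpa using hk

lemma swv_comm {x : MidSlice n} {i j : ℕ} (hi : i+1 < 2*n) (hj : j+1 < 2*n)
    (hf : ¬(j = i ∨ j = i+1 ∨ i = j+1)) :
    swv (swv x i) j = swv (swv x j) i := by
  apply ms_ext
  intro k
  simp only [xe_swv hi, xe_swv hj]
  split_ifs <;> first | rfl | omega

lemma filter_near_card_le (s : Finset ℕ) (i : ℕ) :
    (s.filter (fun j => j = i+1 ∨ i = j+1)).card ≤ 2 := by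
  have hsub : s.filter (fun j => j = i+1 ∨ i = j+1) ⊆ {i+1, i-1} := by
    intro j hj
    rw [Finset.mem_filter] at hj
    simp only [Finset.mem_insert, Finset.mem_singleton]
    omega
  exact (Finset.card_le_card hsub).trans ((Finset.card_insert_le _ _).trans (by simp))

lemma deg_bound {x : MidSlice n} {i : ℕ} (hi : i ∈ Dx x) :
    (Dx (swv x i)).card + 2 * ((Dx x).filter (fun j => j = i+1 ∨ i = j+1)).card
      ≤ (Dx x).card + 2 := by
  obtain ⟨h1, hne⟩ := mem_Dx.1 hi
  set Vi : Finset ℕ := (Finset.range (2*n-1)).filter (fun j => j = i+1 ∨ i = j+1) with hVi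
  have hsub : Dx (swv x i) ⊆ (Dx x).filter (fun j => ¬(j = i+1 ∨ i = j+1)) ∪ (Vi \ Dx x) := by
    intro j hj
    obtain ⟨hj1, hjne⟩ := mem_Dx.1 hj
    by_cases hnear : j = i+1 ∨ i = j+1
    · refine Finset.mem_union_right _ (Finset.mem_sdiff.2 ⟨?_, ?_⟩)
      · rw [hVi, Finset.mem_filter, Finset.mem_range]
        exact ⟨by omega, hnear⟩
      · intro hjx
        obtain ⟨hjx1, hjx2⟩ := mem_Dx.1 hjx
        rcases hnear with hcase | hcase
        · subst hcase
          have e1 := xe_pm x (show i < 2*n by omega)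
          have e2 := xe_pm x (show i+1 < 2*n by omega)
          have e3 := xe_pm x (show i+1+1 < 2*n by omega)
          apply hjne
          rw [xe_swv h1 (i+1), if_neg (by omega), if_pos rfl,
              xe_swv h1 (i+1+1), if_neg (by omega), if_neg (by omega)]
          omega
        · have hij : i = j + 1 := hcase
          subst hij
          have e1 := xe_pm x (show j < 2*n by omega)
          have e2 := xe_pm x (show j+1 < 2*n by omega)
          have e3 := xe_pm x (show j+1+1 < 2*n by omega)
          apply hjne
          rw [xe_swv h1 j, if_neg (by omega), if_neg (by omega),
              xe_swv h1 (j+1), if_pos rfl]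
          omega
    · by_cases hji : j = i
      · subst hji
        exact Finset.mem_union_left _ (Finset.mem_filter.2 ⟨hi, hnear⟩)
      · refine Finset.mem_union_left _ (Finset.mem_filter.2 ⟨mem_Dx.2 ⟨hj1, ?_⟩, hnear⟩)
        rw [xe_swv h1 j, if_neg (by omega), if_neg (by omega),
            xe_swv h1 (j+1), if_neg (by omega), if_neg (by omega)] at hjne
        exact hjne
  have c1 : (Dx (swv x i)).card
      ≤ ((Dx x).filter (fun j => ¬(j = i+1 ∨ i = j+1))).card + (Vi \ Dx x).card :=
    (Finset.card_le_card hsub).trans (Finset.card_union_le _ _)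
  have c2 : ((Dx x).filter (fun j => j = i+1 ∨ i = j+1)).card
      + ((Dx x).filter (fun j => ¬(j = i+1 ∨ i = j+1))).card = (Dx x).card :=
    Finset.card_filter_add_card_filter_not _
  have hinter : Vi ∩ Dx x = (Dx x).filter (fun j => j = i+1 ∨ i = j+1) := by
    ext j
    rw [Finset.mem_inter, hVi, Finset.mem_filter, Finset.mem_filter, Finset.mem_range]
    constructor
    · rintro ⟨⟨-, h⟩, hD⟩; exact ⟨hD, h⟩
    · rintro ⟨hD, h⟩
      obtain ⟨hh, -⟩ := mem_Dx.1 hD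
      exact ⟨⟨by omega, h⟩, hD⟩
  have c3 : (Vi \ Dx x).card + ((Dx x).filter (fun j => j = i+1 ∨ i = j+1)).card = Vi.card := by
    rw [← hinter, Finset.card_sdiff_add_card_inter]
  have c4 : Vi.card ≤ 2 := filter_near_card_le _ _
  omega

lemma split_sum (D : Finset ℕ) (i : ℕ) (hi : i ∈ D) (g : ℕ → ℝ) :
    ∑ j ∈ D, g j
      = g i + (∑ j ∈ D.filter (fun j => j = i+1 ∨ i = j+1), g j)
        + ∑ j ∈ D.filter (fun j => ¬(j = i ∨ j = i+1 ∨ i = j+1)), g j := by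
  have h1 := Finset.sum_filter_add_sum_filter_not D (fun j => j = i ∨ j = i+1 ∨ i = j+1) g
  have h2 : D.filter (fun j => j = i ∨ j = i+1 ∨ i = j+1)
      = insert i (D.filter (fun j => j = i+1 ∨ i = j+1)) := by
    ext j
    simp only [Finset.mem_filter, Finset.mem_insert]
    constructor
    · rintro ⟨hj, rfl | h⟩
      · exact Or.inl rfl
      · exact Or.inr ⟨hj, h⟩
    · rintro (rfl | ⟨hj, h⟩)
      · exact ⟨hi, Or.inl rfl⟩
      · exact ⟨hj, Or.inr h⟩
  have h3 : i ∉ D.filter (fun j => j = i+1 ∨ i = j+1) := by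
    simp only [Finset.mem_filter]
    rintro ⟨-, h | h⟩ <;> omega
  rw [← h1, h2, Finset.sum_insert h3, add_assoc]

lemma sum_swap_pairs (D : Finset ℕ) (P : ℕ → ℕ → Prop) [DecidableRel P]
    (hP : ∀ i j, P i j → P j i) (g : ℕ → ℕ → ℝ) :
    ∑ i ∈ D, ∑ j ∈ D.filter (fun j => P i j), g i j
      = ∑ i ∈ D, ∑ j ∈ D.filter (fun j => P i j), g j i := by
  have key : ∀ (g : ℕ → ℕ → ℝ),
      (∑ i ∈ D, ∑ j ∈ D.filter (fun j => P i j), g i j)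
        = ∑ p ∈ (D ×ˢ D).filter (fun p => P p.1 p.2), g p.1 p.2 := by
    intro g
    rw [Finset.sum_filter, Finset.sum_product]
    refine Finset.sum_congr rfl fun i _ => ?_
    rw [Finset.sum_filter]
  rw [key, key]
  refine Finset.sum_equiv (Equiv.prodComm ℕ ℕ) ?_ ?_
  · intro p
    simp only [Finset.mem_filter, Finset.mem_product, Equiv.prodComm_apply, Prod.fst_swap,
      Prod.snd_swap]
    constructor
    · rintro ⟨⟨ha, hb⟩, hc⟩; exact ⟨⟨hb, ha⟩, hP _ _ hc⟩
    · rintro ⟨⟨ha, hb⟩, hc⟩; exact ⟨⟨hb, ha⟩, hP _ _ hc⟩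
  · intro p _
    rfl

end MSAux

open MSAux in
set_option maxHeartbeats 2000000 in
/-- the middle slice of `{±1}^{2n}` with adjacent transpositions has
`Ric ≥ -1`: `Γ₂(f)(x) ≥ -Γ(f)(x)` for all `f, x`. -/
theorem ric_mid_slice (n : ℕ) :
    ∀ (f : MidSlice n → ℝ) (x : MidSlice n),
      -(gam (midSliceGraph n) f f x) ≤ gam2 (midSliceGraph n) f x := by
  intro f x
  have hgamx : gam (midSliceGraph n) f f x = (1/2) * (∑ i ∈ Dx x, (f (swv x i) - f x)^2) := by
    rw [gam_eq]
    congr 1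
    exact Finset.sum_congr rfl fun i _ => by ring
  have hgamff : ∀ v : MidSlice n, gam (midSliceGraph n) f f v
      = (1/2) * ∑ k ∈ Dx v, (f (swv v k) - f v)^2 := by
    intro v
    rw [gam_eq]
    congr 1
    exact Finset.sum_congr rfl fun k _ => by ring
  have hg2 : gam2 (midSliceGraph n) f x
      = (∑ i ∈ Dx x, ((1/4) * (∑ k ∈ Dx (swv x i), (f (swv (swv x i) k) - 2 * f (swv x i) + f x)^2) - (1/4) * ((Dx (swv x i)).card : ℝ) * (f (swv x i) - f x)^2)) - (1/4) * (((Dx x).card : ℝ) * (∑ i ∈ Dx x, (f (swv x i) - f x)^2)) + (1/2) * (∑ i ∈ Dx x, (f (swv x i) - f x))^2 := by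
    unfold gam2
    rw [lap_eq (gam (midSliceGraph n) f f) x, gam_eq f (lap (midSliceGraph n) f) x]
    have e1 : ∑ i ∈ Dx x, (gam (midSliceGraph n) f f (swv x i) - gam (midSliceGraph n) f f x)
        = ∑ i ∈ Dx x, ((1/2) * (∑ k ∈ Dx (swv x i), (f (swv (swv x i) k) - f (swv x i))^2) - (1/2) * (∑ i ∈ Dx x, (f (swv x i) - f x)^2)) :=
      Finset.sum_congr rfl fun i _ => by rw [hgamff, hgamff]
    have e2 : ∑ i ∈ Dx x, ((f x - f (swv x i))
          * (lap (midSliceGraph n) f x - lap (midSliceGraph n) f (swv x i)))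
        = ∑ i ∈ Dx x, ((f x - f (swv x i)) * ((∑ i ∈ Dx x, (f (swv x i) - f x)) - (∑ k ∈ Dx (swv x i), (f (swv (swv x i) k) - f (swv x i))))) :=
      Finset.sum_congr rfl fun i _ => by rw [lap_eq, lap_eq]
    rw [e1, e2]
    have inner : ∀ i ∈ Dx x,
        (1/4) * (∑ k ∈ Dx (swv x i), (f (swv (swv x i) k) - f (swv x i))^2) - (1/2) * (f (swv x i) - f x) * (∑ k ∈ Dx (swv x i), (f (swv (swv x i) k) - f (swv x i)))
        = (1/4) * (∑ k ∈ Dx (swv x i), (f (swv (swv x i) k) - 2 * f (swv x i) + f x)^2) - (1/4) * ((Dx (swv x i)).card : ℝ) * (f (swv x i) - f x)^2 := by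
      intro i _
      have hc : (1/4) * ((Dx (swv x i)).card : ℝ) * (f (swv x i) - f x)^2
          = ∑ k ∈ Dx (swv x i), (1/4) * (f (swv x i) - f x)^2 := by
        rw [Finset.sum_const, nsmul_eq_mul]
        ring
      rw [Finset.mul_sum, Finset.mul_sum, ← Finset.sum_sub_distrib, Finset.mul_sum, hc,
        ← Finset.sum_sub_distrib]
      exact Finset.sum_congr rfl fun k _ => by ring
    have hper : ∀ i ∈ Dx x,
        (1/2) * ((1/2) * (∑ k ∈ Dx (swv x i), (f (swv (swv x i) k) - f (swv x i))^2) - (1/2) * (∑ i ∈ Dx x, (f (swv x i) - f x)^2)) - (1/2) * ((f x - f (swv x i)) * ((∑ i ∈ Dx x, (f (swv x i) - f x)) - (∑ k ∈ Dx (swv x i), (f (swv (swv x i) k) - f (swv x i)))))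
          = ((1/4) * (∑ k ∈ Dx (swv x i), (f (swv (swv x i) k) - 2 * f (swv x i) + f x)^2) - (1/4) * ((Dx (swv x i)).card : ℝ) * (f (swv x i) - f x)^2) - (1/4) * (∑ i ∈ Dx x, (f (swv x i) - f x)^2) + (f (swv x i) - f x) * ((1/2) * (∑ i ∈ Dx x, (f (swv x i) - f x))) := by
      intro i hi
      linear_combination (inner i hi)
    calc (1/2) * (∑ i ∈ Dx x, ((1/2) * (∑ k ∈ Dx (swv x i), (f (swv (swv x i) k) - f (swv x i))^2) - (1/2) * (∑ i ∈ Dx x, (f (swv x i) - f x)^2))) - (1/2) * (∑ i ∈ Dx x, ((f x - f (swv x i)) * ((∑ i ∈ Dx x, (f (swv x i) - f x)) - (∑ k ∈ Dx (swv x i), (f (swv (swv x i) k) - f (swv x i))))))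
        = ∑ i ∈ Dx x, ((1/2) * ((1/2) * (∑ k ∈ Dx (swv x i), (f (swv (swv x i) k) - f (swv x i))^2) - (1/2) * (∑ i ∈ Dx x, (f (swv x i) - f x)^2)) - (1/2) * ((f x - f (swv x i)) * ((∑ i ∈ Dx x, (f (swv x i) - f x)) - (∑ k ∈ Dx (swv x i), (f (swv (swv x i) k) - f (swv x i)))))) := by
          simp only [Finset.sum_sub_distrib, Finset.sum_add_distrib, Finset.sum_neg_distrib, ← Finset.mul_sum, ← Finset.sum_mul, Finset.sum_const, nsmul_eq_mul]
      _ = ∑ i ∈ Dx x, (((1/4) * (∑ k ∈ Dx (swv x i), (f (swv (swv x i) k) - 2 * f (swv x i) + f x)^2) - (1/4) * ((Dx (swv x i)).card : ℝ) * (f (swv x i) - f x)^2) - (1/4) * (∑ i ∈ Dx x, (f (swv x i) - f x)^2) + (f (swv x i) - f x) * ((1/2) * (∑ i ∈ Dx x, (f (swv x i) - f x)))) :=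
          Finset.sum_congr rfl hper
      _ = (∑ i ∈ Dx x, ((1/4) * (∑ k ∈ Dx (swv x i), (f (swv (swv x i) k) - 2 * f (swv x i) + f x)^2) - (1/4) * ((Dx (swv x i)).card : ℝ) * (f (swv x i) - f x)^2)) - (1/4) * (((Dx x).card : ℝ) * (∑ i ∈ Dx x, (f (swv x i) - f x)^2)) + (1/2) * (∑ i ∈ Dx x, (f (swv x i) - f x))^2 := by
          simp only [Finset.sum_sub_distrib, Finset.sum_add_distrib, Finset.sum_neg_distrib, ← Finset.mul_sum, ← Finset.sum_mul, Finset.sum_const, nsmul_eq_mul]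
          ring
  have hQ : ∀ i ∈ Dx x, 4 * (f (swv x i) - f x)^2
      + (∑ j ∈ (Dx x).filter (fun j => ¬(j = i ∨ j = i + 1 ∨ i = j + 1)), (f (swv (swv x i) j) - 2 * f (swv x i) + f x)^2)
      ≤ (∑ k ∈ Dx (swv x i), (f (swv (swv x i) k) - 2 * f (swv x i) + f x)^2) := by
    intro i hi
    obtain ⟨h1, -⟩ := mem_Dx.1 hi
    have hsub : insert i ((Dx x).filter (fun j => ¬(j = i ∨ j = i + 1 ∨ i = j + 1))) ⊆ Dx (swv x i) := by
      intro k hk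
      rcases Finset.mem_insert.1 hk with rfl | hk
      · exact mem_Dx_swv hi
      · obtain ⟨hk1, hk2⟩ := Finset.mem_filter.1 hk
        exact far_mem hi hk1 hk2
    have hni : i ∉ (Dx x).filter (fun j => ¬(j = i ∨ j = i + 1 ∨ i = j + 1)) := by simp
    have hle : (∑ k ∈ insert i ((Dx x).filter (fun j => ¬(j = i ∨ j = i + 1 ∨ i = j + 1))), (f (swv (swv x i) k) - 2 * f (swv x i) + f x)^2)
        ≤ (∑ k ∈ Dx (swv x i), (f (swv (swv x i) k) - 2 * f (swv x i) + f x)^2) :=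
      Finset.sum_le_sum_of_subset_of_nonneg hsub (fun k _ _ => sq_nonneg _)
    rw [Finset.sum_insert hni, swv_swv h1] at hle
    have hr : (f x - 2 * f (swv x i) + f x)^2 = 4 * (f (swv x i) - f x)^2 := by ring
    linarith [hle]
  have hCCrev : (∑ i ∈ Dx x, ∑ j ∈ (Dx x).filter (fun j => ¬(j = i ∨ j = i + 1 ∨ i = j + 1)), (f (swv (swv x i) j) - 2 * f (swv x i) + f x)^2) = (∑ i ∈ Dx x, ∑ j ∈ (Dx x).filter (fun j => ¬(j = i ∨ j = i + 1 ∨ i = j + 1)), (f (swv (swv x j) i) - 2 * f (swv x j) + f x)^2) :=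
    sum_swap_pairs (Dx x) (fun i j => ¬(j = i ∨ j = i + 1 ∨ i = j + 1))
      (fun i j h => by omega) _
  have hpair : (∑ i ∈ Dx x, ∑ j ∈ (Dx x).filter (fun j => ¬(j = i ∨ j = i + 1 ∨ i = j + 1)), ((f (swv x i) - f x) - (f (swv x j) - f x))^2) ≤ (∑ i ∈ Dx x, ∑ j ∈ (Dx x).filter (fun j => ¬(j = i ∨ j = i + 1 ∨ i = j + 1)), (f (swv (swv x i) j) - 2 * f (swv x i) + f x)^2) := by
    have hper : ∀ i ∈ Dx x, ∀ j ∈ (Dx x).filter (fun j => ¬(j = i ∨ j = i + 1 ∨ i = j + 1)),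
        2 * ((f (swv x i) - f x) - (f (swv x j) - f x))^2
          ≤ (f (swv (swv x i) j) - 2 * f (swv x i) + f x)^2
            + (f (swv (swv x j) i) - 2 * f (swv x j) + f x)^2 := by
      intro i hi j hj
      obtain ⟨hjD, hfar⟩ := Finset.mem_filter.1 hj
      have hcomm := swv_comm (x := x) (mem_Dx.1 hi).1 (mem_Dx.1 hjD).1 hfar
      rw [← hcomm]
      nlinarith [sq_nonneg ((f (swv (swv x i) j) - 2 * f (swv x i) + f x)
        + (f (swv (swv x i) j) - 2 * f (swv x j) + f x))]
    have h2 : ∑ i ∈ Dx x, ∑ j ∈ (Dx x).filter (fun j => ¬(j = i ∨ j = i + 1 ∨ i = j + 1)),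
          (2 * ((f (swv x i) - f x) - (f (swv x j) - f x))^2)
        ≤ ∑ i ∈ Dx x, ∑ j ∈ (Dx x).filter (fun j => ¬(j = i ∨ j = i + 1 ∨ i = j + 1)),
          ((f (swv (swv x i) j) - 2 * f (swv x i) + f x)^2
            + (f (swv (swv x j) i) - 2 * f (swv x j) + f x)^2) :=
      Finset.sum_le_sum fun i hi => Finset.sum_le_sum fun j hj => hper i hi j hj
    have h3 : ∑ i ∈ Dx x, ∑ j ∈ (Dx x).filter (fun j => ¬(j = i ∨ j = i + 1 ∨ i = j + 1)),
          ((f (swv (swv x i) j) - 2 * f (swv x i) + f x)^2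
            + (f (swv (swv x j) i) - 2 * f (swv x j) + f x)^2)
        = (∑ i ∈ Dx x, ∑ j ∈ (Dx x).filter (fun j => ¬(j = i ∨ j = i + 1 ∨ i = j + 1)), (f (swv (swv x i) j) - 2 * f (swv x i) + f x)^2) + (∑ i ∈ Dx x, ∑ j ∈ (Dx x).filter (fun j => ¬(j = i ∨ j = i + 1 ∨ i = j + 1)), (f (swv (swv x j) i) - 2 * f (swv x j) + f x)^2) := by
      simp only [Finset.sum_add_distrib]
    have h4 : ∑ i ∈ Dx x, ∑ j ∈ (Dx x).filter (fun j => ¬(j = i ∨ j = i + 1 ∨ i = j + 1)),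
          (2 * ((f (swv x i) - f x) - (f (swv x j) - f x))^2)
        = 2 * (∑ i ∈ Dx x, ∑ j ∈ (Dx x).filter (fun j => ¬(j = i ∨ j = i + 1 ∨ i = j + 1)), ((f (swv x i) - f x) - (f (swv x j) - f x))^2) := by
      simp only [← Finset.mul_sum]
    rw [h3, h4] at h2
    linarith [h2, hCCrev]
  have hfarcard : ∀ i ∈ Dx x, (((Dx x).filter (fun j => ¬(j = i ∨ j = i + 1 ∨ i = j + 1))).card : ℝ)
      = ((Dx x).card : ℝ) - 1 - (((Dx x).filter (fun j => j = i + 1 ∨ i = j + 1)).card : ℝ) := by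
    intro i hi
    have h := split_sum (Dx x) i hi (fun _ => (1:ℝ))
    simp only [Finset.sum_const, nsmul_eq_mul, mul_one] at h
    linarith [h]
  have hfar_aj : (∑ i ∈ Dx x, ∑ j ∈ (Dx x).filter (fun j => ¬(j = i ∨ j = i + 1 ∨ i = j + 1)), (f (swv x j) - f x)^2) = (∑ i ∈ Dx x, ∑ j ∈ (Dx x).filter (fun j => ¬(j = i ∨ j = i + 1 ∨ i = j + 1)), (f (swv x i) - f x)^2) :=
    sum_swap_pairs (Dx x) (fun i j => ¬(j = i ∨ j = i + 1 ∨ i = j + 1))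
      (fun i j h => by omega) _
  have hFA2 : (∑ i ∈ Dx x, ∑ j ∈ (Dx x).filter (fun j => ¬(j = i ∨ j = i + 1 ∨ i = j + 1)), (f (swv x i) - f x)^2) = ((Dx x).card : ℝ) * (∑ i ∈ Dx x, (f (swv x i) - f x)^2) - (∑ i ∈ Dx x, (f (swv x i) - f x)^2) - (∑ i ∈ Dx x, (((Dx x).filter (fun j => j = i + 1 ∨ i = j + 1)).card : ℝ) * (f (swv x i) - f x)^2) := by
    calc (∑ i ∈ Dx x, ∑ j ∈ (Dx x).filter (fun j => ¬(j = i ∨ j = i + 1 ∨ i = j + 1)), (f (swv x i) - f x)^2) = ∑ i ∈ Dx x, (((Dx x).filter (fun j => ¬(j = i ∨ j = i + 1 ∨ i = j + 1))).card : ℝ) * (f (swv x i) - f x)^2 :=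
          Finset.sum_congr rfl fun i _ => by rw [Finset.sum_const, nsmul_eq_mul]
      _ = ∑ i ∈ Dx x, (((Dx x).card : ℝ) * (f (swv x i) - f x)^2 - (f (swv x i) - f x)^2
            - (((Dx x).filter (fun j => j = i + 1 ∨ i = j + 1)).card : ℝ) * (f (swv x i) - f x)^2) :=
          Finset.sum_congr rfl fun i hi => by rw [hfarcard i hi]; ring
      _ = ((Dx x).card : ℝ) * (∑ i ∈ Dx x, (f (swv x i) - f x)^2) - (∑ i ∈ Dx x, (f (swv x i) - f x)^2) - (∑ i ∈ Dx x, (((Dx x).filter (fun j => j = i + 1 ∨ i = j + 1)).card : ℝ) * (f (swv x i) - f x)^2) := by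
          simp only [Finset.sum_sub_distrib, Finset.sum_add_distrib, Finset.sum_neg_distrib, ← Finset.mul_sum, ← Finset.sum_mul, Finset.sum_const, nsmul_eq_mul]
  have hPF : (∑ i ∈ Dx x, ∑ j ∈ (Dx x).filter (fun j => ¬(j = i ∨ j = i + 1 ∨ i = j + 1)), ((f (swv x i) - f x) - (f (swv x j) - f x))^2) = 2 * (((Dx x).card : ℝ) * (∑ i ∈ Dx x, (f (swv x i) - f x)^2)) - 2 * (∑ i ∈ Dx x, (f (swv x i) - f x)^2) - 2 * (∑ i ∈ Dx x, (((Dx x).filter (fun j => j = i + 1 ∨ i = j + 1)).card : ℝ) * (f (swv x i) - f x)^2) - 2 * (∑ i ∈ Dx x, ∑ j ∈ (Dx x).filter (fun j => ¬(j = i ∨ j = i + 1 ∨ i = j + 1)), (f (swv x i) - f x) * (f (swv x j) - f x)) := by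
    have e1 : (∑ i ∈ Dx x, ∑ j ∈ (Dx x).filter (fun j => ¬(j = i ∨ j = i + 1 ∨ i = j + 1)), ((f (swv x i) - f x) - (f (swv x j) - f x))^2) = (∑ i ∈ Dx x, ∑ j ∈ (Dx x).filter (fun j => ¬(j = i ∨ j = i + 1 ∨ i = j + 1)), (f (swv x i) - f x)^2) + (∑ i ∈ Dx x, ∑ j ∈ (Dx x).filter (fun j => ¬(j = i ∨ j = i + 1 ∨ i = j + 1)), (f (swv x j) - f x)^2) - 2 * (∑ i ∈ Dx x, ∑ j ∈ (Dx x).filter (fun j => ¬(j = i ∨ j = i + 1 ∨ i = j + 1)), (f (swv x i) - f x) * (f (swv x j) - f x)) := by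
      calc (∑ i ∈ Dx x, ∑ j ∈ (Dx x).filter (fun j => ¬(j = i ∨ j = i + 1 ∨ i = j + 1)), ((f (swv x i) - f x) - (f (swv x j) - f x))^2) = ∑ i ∈ Dx x, ∑ j ∈ (Dx x).filter (fun j => ¬(j = i ∨ j = i + 1 ∨ i = j + 1)), ((f (swv x i) - f x)^2 + (f (swv x j) - f x)^2
            - 2 * ((f (swv x i) - f x) * (f (swv x j) - f x))) :=
            Finset.sum_congr rfl fun i _ => Finset.sum_congr rfl fun j _ => by ring
        _ = (∑ i ∈ Dx x, ∑ j ∈ (Dx x).filter (fun j => ¬(j = i ∨ j = i + 1 ∨ i = j + 1)), (f (swv x i) - f x)^2) + (∑ i ∈ Dx x, ∑ j ∈ (Dx x).filter (fun j => ¬(j = i ∨ j = i + 1 ∨ i = j + 1)), (f (swv x j) - f x)^2) - 2 * (∑ i ∈ Dx x, ∑ j ∈ (Dx x).filter (fun j => ¬(j = i ∨ j = i + 1 ∨ i = j + 1)), (f (swv x i) - f x) * (f (swv x j) - f x)) := by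
            simp only [Finset.sum_sub_distrib, Finset.sum_add_distrib, Finset.sum_neg_distrib, ← Finset.mul_sum, ← Finset.sum_mul, Finset.sum_const, nsmul_eq_mul]
    rw [e1, hfar_aj, hFA2]
    ring
  have hA2 : (∑ i ∈ Dx x, (f (swv x i) - f x))^2 = (∑ i ∈ Dx x, (f (swv x i) - f x)^2) + (∑ i ∈ Dx x, ∑ j ∈ (Dx x).filter (fun j => j = i + 1 ∨ i = j + 1), (f (swv x i) - f x) * (f (swv x j) - f x)) + (∑ i ∈ Dx x, ∑ j ∈ (Dx x).filter (fun j => ¬(j = i ∨ j = i + 1 ∨ i = j + 1)), (f (swv x i) - f x) * (f (swv x j) - f x)) := by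
    have e0 : (∑ i ∈ Dx x, (f (swv x i) - f x))^2 = ∑ i ∈ Dx x, ((f (swv x i) - f x) * (∑ i ∈ Dx x, (f (swv x i) - f x))) := by
      rw [sq, Finset.sum_mul]
    have e1 : ∀ i ∈ Dx x, (f (swv x i) - f x) * (∑ i ∈ Dx x, (f (swv x i) - f x))
        = (f (swv x i) - f x) * (f (swv x i) - f x)
          + (∑ j ∈ (Dx x).filter (fun j => j = i + 1 ∨ i = j + 1), (f (swv x i) - f x) * (f (swv x j) - f x))
          + ∑ j ∈ (Dx x).filter (fun j => ¬(j = i ∨ j = i + 1 ∨ i = j + 1)), (f (swv x i) - f x) * (f (swv x j) - f x) := by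
      intro i hi
      rw [Finset.mul_sum]
      exact split_sum (Dx x) i hi _
    calc (∑ i ∈ Dx x, (f (swv x i) - f x))^2 = ∑ i ∈ Dx x, ((f (swv x i) - f x) * (∑ i ∈ Dx x, (f (swv x i) - f x))) := e0
      _ = ∑ i ∈ Dx x, ((f (swv x i) - f x) * (f (swv x i) - f x)
          + (∑ j ∈ (Dx x).filter (fun j => j = i + 1 ∨ i = j + 1), (f (swv x i) - f x) * (f (swv x j) - f x))
          + ∑ j ∈ (Dx x).filter (fun j => ¬(j = i ∨ j = i + 1 ∨ i = j + 1)), (f (swv x i) - f x) * (f (swv x j) - f x)) :=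
          Finset.sum_congr rfl e1
      _ = ∑ i ∈ Dx x, ((f (swv x i) - f x)^2
          + (∑ j ∈ (Dx x).filter (fun j => j = i + 1 ∨ i = j + 1), (f (swv x i) - f x) * (f (swv x j) - f x))
          + ∑ j ∈ (Dx x).filter (fun j => ¬(j = i ∨ j = i + 1 ∨ i = j + 1)), (f (swv x i) - f x) * (f (swv x j) - f x)) :=
          Finset.sum_congr rfl fun i _ => by ring_nf
      _ = (∑ i ∈ Dx x, (f (swv x i) - f x)^2) + (∑ i ∈ Dx x, ∑ j ∈ (Dx x).filter (fun j => j = i + 1 ∨ i = j + 1), (f (swv x i) - f x) * (f (swv x j) - f x)) + (∑ i ∈ Dx x, ∑ j ∈ (Dx x).filter (fun j => ¬(j = i ∨ j = i + 1 ∨ i = j + 1)), (f (swv x i) - f x) * (f (swv x j) - f x)) := by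
          simp only [Finset.sum_add_distrib]
  have hnear_aj : (∑ i ∈ Dx x, ∑ j ∈ (Dx x).filter (fun j => j = i + 1 ∨ i = j + 1), (f (swv x j) - f x)^2) = (∑ i ∈ Dx x, ∑ j ∈ (Dx x).filter (fun j => j = i + 1 ∨ i = j + 1), (f (swv x i) - f x)^2) :=
    sum_swap_pairs (Dx x) (fun i j => j = i + 1 ∨ i = j + 1) (fun i j h => by omega) _
  have hNA2 : (∑ i ∈ Dx x, ∑ j ∈ (Dx x).filter (fun j => j = i + 1 ∨ i = j + 1), (f (swv x i) - f x)^2) = (∑ i ∈ Dx x, (((Dx x).filter (fun j => j = i + 1 ∨ i = j + 1)).card : ℝ) * (f (swv x i) - f x)^2) :=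
    Finset.sum_congr rfl fun i _ => by rw [Finset.sum_const, nsmul_eq_mul]
  have hXN : -(∑ i ∈ Dx x, (((Dx x).filter (fun j => j = i + 1 ∨ i = j + 1)).card : ℝ) * (f (swv x i) - f x)^2) ≤ (∑ i ∈ Dx x, ∑ j ∈ (Dx x).filter (fun j => j = i + 1 ∨ i = j + 1), (f (swv x i) - f x) * (f (swv x j) - f x)) := by
    have hper : ∀ i ∈ Dx x, ∀ j ∈ (Dx x).filter (fun j => j = i + 1 ∨ i = j + 1),
        -((1/2) * (f (swv x i) - f x)^2) - (1/2) * (f (swv x j) - f x)^2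
          ≤ (f (swv x i) - f x) * (f (swv x j) - f x) := by
      intro i _ j _
      nlinarith [sq_nonneg ((f (swv x i) - f x) + (f (swv x j) - f x))]
    have h1 : ∑ i ∈ Dx x, ∑ j ∈ (Dx x).filter (fun j => j = i + 1 ∨ i = j + 1),
          (-((1/2) * (f (swv x i) - f x)^2) - (1/2) * (f (swv x j) - f x)^2) ≤ (∑ i ∈ Dx x, ∑ j ∈ (Dx x).filter (fun j => j = i + 1 ∨ i = j + 1), (f (swv x i) - f x) * (f (swv x j) - f x)) :=
      Finset.sum_le_sum fun i hi => Finset.sum_le_sum fun j hj => hper i hi j hj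
    have h2 : ∑ i ∈ Dx x, ∑ j ∈ (Dx x).filter (fun j => j = i + 1 ∨ i = j + 1),
          (-((1/2) * (f (swv x i) - f x)^2) - (1/2) * (f (swv x j) - f x)^2)
        = -((1/2) * (∑ i ∈ Dx x, ∑ j ∈ (Dx x).filter (fun j => j = i + 1 ∨ i = j + 1), (f (swv x i) - f x)^2)) - (1/2) * (∑ i ∈ Dx x, ∑ j ∈ (Dx x).filter (fun j => j = i + 1 ∨ i = j + 1), (f (swv x j) - f x)^2) := by
      simp only [Finset.sum_sub_distrib, Finset.sum_add_distrib, Finset.sum_neg_distrib, ← Finset.mul_sum, ← Finset.sum_mul, Finset.sum_const, nsmul_eq_mul]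
      try ring
    rw [h2, hnear_aj, hNA2] at h1
    linarith [h1]
  have hMR : (∑ i ∈ Dx x, (((Dx x).filter (fun j => j = i + 1 ∨ i = j + 1)).card : ℝ) * (f (swv x i) - f x)^2) ≤ 2 * (∑ i ∈ Dx x, (f (swv x i) - f x)^2) := by
    have h1 : ∀ i ∈ Dx x, (((Dx x).filter (fun j => j = i + 1 ∨ i = j + 1)).card : ℝ) * (f (swv x i) - f x)^2
        ≤ 2 * (f (swv x i) - f x)^2 := by
      intro i _
      have hc : (((Dx x).filter (fun j => j = i + 1 ∨ i = j + 1)).card : ℝ) ≤ 2 := by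
        exact_mod_cast filter_near_card_le (Dx x) i
      exact mul_le_mul_of_nonneg_right hc (sq_nonneg _)
    calc (∑ i ∈ Dx x, (((Dx x).filter (fun j => j = i + 1 ∨ i = j + 1)).card : ℝ) * (f (swv x i) - f x)^2) ≤ ∑ i ∈ Dx x, 2 * (f (swv x i) - f x)^2 := Finset.sum_le_sum h1
      _ = 2 * (∑ i ∈ Dx x, (f (swv x i) - f x)^2) := by simp only [← Finset.mul_sum]
  have hSQ2 : (0:ℝ) ≤ (∑ i ∈ Dx x, (f (swv x i) - f x)^2) := Finset.sum_nonneg fun i _ => sq_nonneg _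
  have hT1 : (∑ i ∈ Dx x, (f (swv x i) - f x)^2) + (1/4) * (∑ i ∈ Dx x, ∑ j ∈ (Dx x).filter (fun j => ¬(j = i ∨ j = i + 1 ∨ i = j + 1)), (f (swv (swv x i) j) - 2 * f (swv x i) + f x)^2)
        - ((1/4) * (((Dx x).card : ℝ) * (∑ i ∈ Dx x, (f (swv x i) - f x)^2)) + (1/2) * (∑ i ∈ Dx x, (f (swv x i) - f x)^2) - (1/2) * (∑ i ∈ Dx x, (((Dx x).filter (fun j => j = i + 1 ∨ i = j + 1)).card : ℝ) * (f (swv x i) - f x)^2)) ≤ (∑ i ∈ Dx x, ((1/4) * (∑ k ∈ Dx (swv x i), (f (swv (swv x i) k) - 2 * f (swv x i) + f x)^2) - (1/4) * ((Dx (swv x i)).card : ℝ) * (f (swv x i) - f x)^2)) := by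
    have hper : ∀ i ∈ Dx x,
        (f (swv x i) - f x)^2
          + (1/4) * (∑ j ∈ (Dx x).filter (fun j => ¬(j = i ∨ j = i + 1 ∨ i = j + 1)), (f (swv (swv x i) j) - 2 * f (swv x i) + f x)^2)
          - ((1/4) * (((Dx x).card : ℝ) * (f (swv x i) - f x)^2) + (1/2) * (f (swv x i) - f x)^2
            - (1/2) * ((((Dx x).filter (fun j => j = i + 1 ∨ i = j + 1)).card : ℝ) * (f (swv x i) - f x)^2))
        ≤ ((1/4) * (∑ k ∈ Dx (swv x i), (f (swv (swv x i) k) - 2 * f (swv x i) + f x)^2) - (1/4) * ((Dx (swv x i)).card : ℝ) * (f (swv x i) - f x)^2) := by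
      intro i hi
      have hQi := hQ i hi
      have hdi : ((Dx (swv x i)).card : ℝ) + 2 * (((Dx x).filter (fun j => j = i + 1 ∨ i = j + 1)).card : ℝ) ≤ ((Dx x).card : ℝ) + 2 := by
        exact_mod_cast deg_bound hi
      have hprod := mul_le_mul_of_nonneg_right hdi (sq_nonneg (f (swv x i) - f x))
      nlinarith [hQi, hprod]
    have hb := Finset.sum_le_sum hper
    have he : ∑ i ∈ Dx x, ((f (swv x i) - f x)^2
          + (1/4) * (∑ j ∈ (Dx x).filter (fun j => ¬(j = i ∨ j = i + 1 ∨ i = j + 1)), (f (swv (swv x i) j) - 2 * f (swv x i) + f x)^2)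
          - ((1/4) * (((Dx x).card : ℝ) * (f (swv x i) - f x)^2) + (1/2) * (f (swv x i) - f x)^2
            - (1/2) * ((((Dx x).filter (fun j => j = i + 1 ∨ i = j + 1)).card : ℝ) * (f (swv x i) - f x)^2)))
        = (∑ i ∈ Dx x, (f (swv x i) - f x)^2) + (1/4) * (∑ i ∈ Dx x, ∑ j ∈ (Dx x).filter (fun j => ¬(j = i ∨ j = i + 1 ∨ i = j + 1)), (f (swv (swv x i) j) - 2 * f (swv x i) + f x)^2)
          - ((1/4) * (((Dx x).card : ℝ) * (∑ i ∈ Dx x, (f (swv x i) - f x)^2)) + (1/2) * (∑ i ∈ Dx x, (f (swv x i) - f x)^2) - (1/2) * (∑ i ∈ Dx x, (((Dx x).filter (fun j => j = i + 1 ∨ i = j + 1)).card : ℝ) * (f (swv x i) - f x)^2)) := by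
      simp only [Finset.sum_sub_distrib, Finset.sum_add_distrib, Finset.sum_neg_distrib, ← Finset.mul_sum, ← Finset.sum_mul, Finset.sum_const, nsmul_eq_mul]
      try ring
    rw [he] at hb
    exact hb
  rw [hgamx]
  linarith [hg2, hT1, hpair, hPF, hA2, hXN, hMR, hSQ2]
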